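/- Let Λ ⊂ Z^d be a finite hypercube with periodic boundary conditions, and let P_Λ^per be the associated PCA transition probability. Then the measure ν_Λ^per(σ) = (W_Λ^per)^{-1} ∏_{i∈Λ} cosh(β Σ_{j∈Z^d} k(i−j) σ̃_j + βh) e^{βhσ_i}, where σ̃ denotes the periodic continuation of σ and W_Λ^per the normalization, is the unique stationary measure for P_Λ^per and is reversible for P_Λ^per; moreover ν_Λ^per coincides with the finite-volume Gibbs measure μ_Λ^per with periodic boundary conditions for the potential Φ given by Φ_{{i}}(σ) = −βhσ_i, Φ_{U_i}(σ) = −log cosh(β Σ_j k(i−j)σ_j + βh) with U_i = {j : k(i−j) ≠ 0}, and Φ_A = 0 for all other finite A. -/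

import Mathlib

open MeasureTheory Filter

namespace PCA

noncomputable section

/-- Sites of the lattice `ℤ^d`. -/
abbrev Site (d : ℕ) := Fin d → ℤ

/-- Spin configurations on `ℤ^d` with spins in `{-1,1}` encoded by `Bool`. -/
abbrev Conf (d : ℕ) := Site d → Bool

/-- The real value of a spin: `true ↦ 1`, `false ↦ -1`. -/
def val (b : Bool) : ℝ := if b then 1 else -1

/-- Squared Euclidean norm of a site. -/
def normSq {d : ℕ} (i : Site d) : ℤ := ∑ t, (i t) ^ 2

/-- The local field `Σ_j k(i-j) η_j`. -/
def field {d : ℕ} (k : Site d → ℝ) (i : Site d) (η : Conf d) : ℝ :=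
  ∑' j : Site d, k (i - j) * val (η j)

/-- Single site updating probability
`p_i(s|η) = (1 + s tanh(β Σ_j k(i-j) η_j + β h))/2`. -/
def pval {d : ℕ} (β h : ℝ) (k : Site d → ℝ) (i : Site d) (s : Bool) (η : Conf d) : ℝ :=
  (1 + val s * Real.tanh (β * field k i η + β * h)) / 2

/-- The configuration equal to `a` on `Λ` and to `τ` outside `Λ`. -/
def fill {d : ℕ} (Λ : Finset (Site d)) (a : ↥Λ → Bool) (τ : Conf d) : Conf d :=
  fun j => if h : j ∈ Λ then a ⟨j, h⟩ else τ j

/-- Finite volume PCA transition probability with boundary condition `τ`: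
`P_Λ^τ(σ|η) = ∏_{i ∈ Λ} p_i(σ_i | η_Λ τ_{Λ^c})`. -/
def Pfin {d : ℕ} (β h : ℝ) (k : Site d → ℝ) (Λ : Finset (Site d)) (τ : Conf d)
    (σ η : ↥Λ → Bool) : ℝ :=
  ∏ i : ↥Λ, pval β h k i.1 (σ i) (fill Λ η τ)

/-- The boundary field `Σ_{j ∈ Λ^c} k(i-j) τ_j`. -/
def outField {d : ℕ} (k : Site d → ℝ) (Λ : Finset (Site d)) (τ : Conf d) (i : Site d) : ℝ :=
  ∑' j : Site d, if j ∈ Λ then 0 else k (i - j) * val (τ j)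

/-- Unnormalized stationary measure of the finite volume PCA:
`∏_{i∈Λ} e^{βhσ_i} cosh(β Σ_j k(i-j) σ̃_j + βh) e^{β σ_i Σ_{j∈Λ^c} k(i-j) τ_j}`. -/
def nuNum {d : ℕ} (β h : ℝ) (k : Site d → ℝ) (Λ : Finset (Site d)) (τ : Conf d)
    (σ : ↥Λ → Bool) : ℝ :=
  ∏ i : ↥Λ,
    Real.exp (β * h * val (σ i))
      * Real.cosh (β * field k i.1 (fill Λ σ τ) + β * h)
      * Real.exp (β * val (σ i) * outField k Λ τ i.1)

/-- The normalized stationary measure `ν_Λ^τ`. -/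
def nu {d : ℕ} (β h : ℝ) (k : Site d → ℝ) (Λ : Finset (Site d)) (τ : Conf d)
    (σ : ↥Λ → Bool) : ℝ :=
  nuNum β h k Λ τ σ / ∑ σ' : ↥Λ → Bool, nuNum β h k Λ τ σ'


/-- The hypercube `∏_t [c_t, c_t + L)` in `ℤ^d`. -/
def boxAt {d : ℕ} (c : Site d) (L : ℕ) : Finset (Site d) :=
  Fintype.piFinset fun t => Finset.Ico (c t) (c t + L)

/-- Periodic continuation to `ℤ^d` of a configuration on the hypercube `boxAt c L`. -/
def perfill {d : ℕ} (c : Site d) (L : ℕ) (hL : 0 < L) (σ : ↥(boxAt c L) → Bool) : Conf d :=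
  fun j => σ ⟨fun t => c t + (j t - c t) % (L : ℤ), by
    have hL' : (0 : ℤ) < (L : ℤ) := by exact_mod_cast hL
    simp only [boxAt, Fintype.mem_piFinset, Finset.mem_Ico]
    intro t
    have h1 := Int.emod_nonneg (j t - c t) hL'.ne'
    have h2 := Int.emod_lt_of_pos (j t - c t) hL'
    omega⟩

/-- Finite volume PCA transition probability with periodic boundary conditions on the
hypercube `boxAt c L`. -/
def Pper {d : ℕ} (β h : ℝ) (k : Site d → ℝ) (c : Site d) (L : ℕ) (hL : 0 < L)
    (σ η : ↥(boxAt c L) → Bool) : ℝ :=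
  ∏ i : ↥(boxAt c L), pval β h k i.1 (σ i) (perfill c L hL η)

/-- Unnormalized stationary measure with periodic boundary conditions:
`∏_{i∈Λ} cosh(β Σ_j k(i-j) σ̃_j + βh) e^{βhσ_i}`, `σ̃` the periodic continuation. -/
def nuPerNum {d : ℕ} (β h : ℝ) (k : Site d → ℝ) (c : Site d) (L : ℕ) (hL : 0 < L)
    (σ : ↥(boxAt c L) → Bool) : ℝ :=
  ∏ i : ↥(boxAt c L),
    Real.cosh (β * field k i.1 (perfill c L hL σ) + β * h) * Real.exp (β * h * val (σ i))

/-- The normalized stationary measure `ν_Λ^per`. -/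
def nuPer {d : ℕ} (β h : ℝ) (k : Site d → ℝ) (c : Site d) (L : ℕ) (hL : 0 < L)
    (σ : ↥(boxAt c L) → Bool) : ℝ :=
  nuPerNum β h k c L hL σ / ∑ σ' : ↥(boxAt c L) → Bool, nuPerNum β h k c L hL σ'

/-- Unnormalized finite volume Gibbs measure with periodic boundary conditions for the
potential `Φ_{{i}}(σ) = -βhσ_i`, `Φ_{U_i}(σ) = -log cosh(β Σ_j k(i-j) σ_j + βh)`:
the energy is `Σ_{i∈Λ} (-βhσ_i - log cosh(β Σ_j k(i-j) σ̃_j + βh))` with `σ̃` the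
periodic continuation of `σ`. -/
def gibbsPerNum {d : ℕ} (β h : ℝ) (k : Site d → ℝ) (c : Site d) (L : ℕ) (hL : 0 < L)
    (σ : ↥(boxAt c L) → Bool) : ℝ :=
  Real.exp (-(∑ i : ↥(boxAt c L),
    (-(β * h * val (σ i)) -
      Real.log (Real.cosh (β * field k i.1 (perfill c L hL σ) + β * h)))))

/-- The normalized finite volume Gibbs measure `μ_Λ^per` with periodic boundary conditions. -/
def gibbsPer {d : ℕ} (β h : ℝ) (k : Site d → ℝ) (c : Site d) (L : ℕ) (hL : 0 < L)
    (σ : ↥(boxAt c L) → Bool) : ℝ :=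
  gibbsPerNum β h k c L hL σ / ∑ σ' : ↥(boxAt c L) → Bool, gibbsPerNum β h k c L hL σ'

/-! ### Auxiliary lemmas -/

section Aux

variable {d : ℕ}

lemma pval_exp (β h : ℝ) (k : Site d → ℝ) (i : Site d) (s : Bool) (η : Conf d) :
    pval β h k i s η = Real.exp (val s * (β * field k i η + β * h)) /
      (2 * Real.cosh (β * field k i η + β * h)) := by
  set A := β * field k i η + β * h with hA
  have hc := Real.cosh_pos A
  have h1 := Real.cosh_add_sinh A
  have h2 := Real.cosh_sub_sinh A
  unfold pval
  rw [Real.tanh_eq_sinh_div_cosh, ← hA]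
  cases s <;> simp only [val, if_true, if_false, Bool.false_eq_true] <;>
    rw [div_eq_div_iff (by norm_num) (by positivity)] <;> field_simp <;> nlinarith

lemma pval_pos (β h : ℝ) (k : Site d → ℝ) (i : Site d) (s : Bool) (η : Conf d) :
    0 < pval β h k i s η := by
  rw [pval_exp]
  positivity

lemma pval_sum_one (β h : ℝ) (k : Site d → ℝ) (i : Site d) (η : Conf d) :
    pval β h k i true η + pval β h k i false η = 1 := by
  unfold pval
  simp only [val, if_true, if_false, Bool.false_eq_true]
  ring

/-- A finite set containing the support of a finite-range `k`. -/
lemma exists_support_finset (R : ℝ) (hR : 0 < R) (k : Site d → ℝ)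
    (hrange : ∀ i : Site d, R ^ 2 < (normSq i : ℝ) → k i = 0) :
    ∃ B : Finset (Site d), ∀ x ∉ B, k x = 0 := by
  classical
  set N : ℕ := ⌈R⌉₊ with hN
  refine ⟨Fintype.piFinset fun _ => Finset.Icc (-(N : ℤ)) N, fun x hx => ?_⟩
  simp only [Fintype.mem_piFinset, Finset.mem_Icc, not_forall] at hx
  obtain ⟨t, ht⟩ := hx
  apply hrange
  have hsq : (x t) ^ 2 ≤ normSq x := by
    unfold normSq
    exact Finset.single_le_sum (f := fun t => (x t) ^ 2)
      (fun _ _ => sq_nonneg _) (Finset.mem_univ t)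
  have hRN : R ≤ (N : ℝ) := Nat.le_ceil R
  have hxt : ((N : ℤ) + 1) ^ 2 ≤ (x t) ^ 2 := by
    rcases not_and_or.1 ht with h' | h' <;> nlinarith [le_of_not_ge (by exact_mod_cast h' : _)]
  have h1 : (R : ℝ) ^ 2 < (((N : ℤ) + 1 : ℤ) : ℝ) ^ 2 := by
    push_cast
    nlinarith
  have h2 : ((((x t) ^ 2 : ℤ) : ℝ)) ≤ ((normSq x : ℤ) : ℝ) := by exact_mod_cast hsq
  have h3 : ((((N : ℤ) + 1) ^ 2 : ℤ) : ℝ) ≤ (((x t) ^ 2 : ℤ) : ℝ) := by exact_mod_cast hxt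
  calc R ^ 2 < (((N : ℤ) + 1 : ℤ) : ℝ) ^ 2 := h1
    _ = ((((N : ℤ) + 1) ^ 2 : ℤ) : ℝ) := by push_cast; ring
    _ ≤ ((normSq x : ℤ) : ℝ) := le_trans h3 h2

lemma mem_boxAt_mod (c : Site d) (L : ℕ) (hL : 0 < L) (j : Site d) :
    (fun t => c t + (j t - c t) % (L : ℤ)) ∈ boxAt c L := by
  have hL' : (0 : ℤ) < (L : ℤ) := by exact_mod_cast hL
  simp only [boxAt, Fintype.mem_piFinset, Finset.mem_Ico]
  intro t
  have h1 := Int.emod_nonneg (j t - c t) hL'.ne'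
  have h2 := Int.emod_lt_of_pos (j t - c t) hL'
  omega

/-- The decomposition `ℤ^d ≃ Λ × ℤ^d`, `(j', m) ↦ j' + L m`. -/
def boxEquiv (c : Site d) (L : ℕ) (hL : 0 < L) : ↥(boxAt c L) × Site d ≃ Site d where
  toFun p := fun t => p.1.1 t + (L : ℤ) * p.2 t
  invFun j := (⟨fun t => c t + (j t - c t) % (L : ℤ), mem_boxAt_mod c L hL j⟩,
    fun t => (j t - c t) / (L : ℤ))
  left_inv := by
    rintro ⟨⟨j', hj'⟩, m⟩
    have hL' : (0 : ℤ) < (L : ℤ) := by exact_mod_cast hL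
    simp only [boxAt, Fintype.mem_piFinset, Finset.mem_Ico] at hj'
    refine Prod.ext (Subtype.ext (funext fun t => ?_)) (funext fun t => ?_)
    · have h := hj' t
      have h1 : j' t + (L : ℤ) * m t - c t = (j' t - c t) + (L : ℤ) * m t := by ring
      simp only [h1, Int.add_mul_emod_self_left]
      rw [Int.emod_eq_of_lt (by omega) (by omega)]
      omega
    · have h := hj' t
      have h1 : j' t + (L : ℤ) * m t - c t = (j' t - c t) + (L : ℤ) * m t := by ring
      simp only [h1]
      rw [Int.add_mul_ediv_left _ _ hL'.ne', Int.ediv_eq_zero_of_lt (by omega) (by omega)]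
      omega
  right_inv := by
    intro j
    funext t
    simp only []
    have := Int.emod_add_mul_ediv (j t - c t) (L : ℤ)
    omega

lemma perfill_eq_symm (c : Site d) (L : ℕ) (hL : 0 < L) (η : ↥(boxAt c L) → Bool)
    (j : Site d) : perfill c L hL η j = η ((boxEquiv c L hL).symm j).1 := rfl

lemma perfill_boxEquiv (c : Site d) (L : ℕ) (hL : 0 < L) (η : ↥(boxAt c L) → Bool)
    (p : ↥(boxAt c L) × Site d) :
    perfill c L hL η (boxEquiv c L hL p) = η p.1 := by
  rw [perfill_eq_symm, Equiv.symm_apply_apply]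

/-- The periodized interaction `K(i,j) = Σ_m k(i - j - Lm)`. -/
def Kk (k : Site d → ℝ) (L : ℕ) (i j : Site d) : ℝ :=
  ∑' m : Site d, k (i - j - (L : ℤ) • m)

lemma Kk_symm (k : Site d → ℝ) (hsym : ∀ i : Site d, k (-i) = k i) (L : ℕ)
    (i j : Site d) : Kk k L i j = Kk k L j i := by
  unfold Kk
  rw [← (Equiv.neg (Site d)).tsum_eq (fun m => k (j - i - (L : ℤ) • m))]
  refine tsum_congr fun m => ?_
  have h1 : j - i - (L : ℤ) • ((Equiv.neg (Site d)) m) = -(i - j - (L : ℤ) • m) := by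
    simp only [Equiv.neg_apply, smul_neg]
    abel
  rw [h1, hsym]

lemma summable_pair (k : Site d → ℝ) {B : Finset (Site d)} (hB : ∀ x ∉ B, k x = 0)
    (c : Site d) (L : ℕ) (hL : 0 < L) (i : Site d) (g : ↥(boxAt c L) → ℝ) :
    Summable (fun p : ↥(boxAt c L) × Site d =>
      k (i - p.1.1 - (L : ℤ) • p.2) * g p.1) := by
  classical
  apply summable_of_ne_finset_zero
    (s := Finset.image (fun x => (boxEquiv c L hL).symm (i - x)) B)
  intro p hp
  by_contra hne
  have hk : k (i - p.1.1 - (L : ℤ) • p.2) ≠ 0 := fun h0 => hne (by rw [h0, zero_mul])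
  have hx : (i - p.1.1 - (L : ℤ) • p.2) ∈ B := by
    by_contra hxB
    exact hk (hB _ hxB)
  apply hp
  refine Finset.mem_image.2 ⟨_, hx, ?_⟩
  have h1 : i - (i - p.1.1 - (L : ℤ) • p.2) = boxEquiv c L hL p := by
    funext t
    simp only [boxEquiv, Equiv.coe_fn_mk, Pi.sub_apply, Pi.smul_apply, smul_eq_mul]
    ring
  rw [h1, Equiv.symm_apply_apply]

lemma field_perfill (k : Site d → ℝ) {B : Finset (Site d)} (hB : ∀ x ∉ B, k x = 0)
    (c : Site d) (L : ℕ) (hL : 0 < L) (η : ↥(boxAt c L) → Bool) (i : Site d) :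
    field k i (perfill c L hL η) = ∑ j : ↥(boxAt c L), Kk k L i j.1 * val (η j) := by
  classical
  have hsummable := summable_pair k hB c L hL i (fun j => val (η j))
  unfold field
  rw [← (boxEquiv c L hL).tsum_eq (fun j => k (i - j) * val (perfill c L hL η j))]
  calc ∑' p : ↥(boxAt c L) × Site d,
        k (i - boxEquiv c L hL p) * val (perfill c L hL η (boxEquiv c L hL p))
      = ∑' p : ↥(boxAt c L) × Site d, k (i - p.1.1 - (L : ℤ) • p.2) * val (η p.1) := by
        refine tsum_congr fun p => ?_
        rw [perfill_boxEquiv]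
        congr 2
        funext t
        simp only [boxEquiv, Equiv.coe_fn_mk, Pi.sub_apply, Pi.smul_apply, smul_eq_mul]
        ring
    _ = ∑' (a : ↥(boxAt c L)), ∑' (m : Site d), k (i - a.1 - (L : ℤ) • m) * val (η a) :=
        Summable.tsum_prod' hsummable fun b => hsummable.prod_factor b
    _ = ∑ a : ↥(boxAt c L), ∑' (m : Site d), k (i - a.1 - (L : ℤ) • m) * val (η a) :=
        tsum_fintype _
    _ = ∑ a : ↥(boxAt c L), Kk k L i a.1 * val (η a) :=
        Finset.sum_congr rfl fun a _ => tsum_mul_right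

lemma Ssym (k : Site d → ℝ) (hsym : ∀ i : Site d, k (-i) = k i)
    {B : Finset (Site d)} (hB : ∀ x ∉ B, k x = 0)
    (c : Site d) (L : ℕ) (hL : 0 < L) (σ η : ↥(boxAt c L) → Bool) :
    ∑ i : ↥(boxAt c L), val (σ i) * field k i.1 (perfill c L hL η)
      = ∑ i : ↥(boxAt c L), val (η i) * field k i.1 (perfill c L hL σ) := by
  simp only [field_perfill k hB c L hL]
  calc ∑ i : ↥(boxAt c L), val (σ i) * ∑ j : ↥(boxAt c L), Kk k L i.1 j.1 * val (η j)
      = ∑ i : ↥(boxAt c L), ∑ j : ↥(boxAt c L), val (σ i) * (Kk k L i.1 j.1 * val (η j)) := by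
        simp [Finset.mul_sum]
    _ = ∑ j : ↥(boxAt c L), ∑ i : ↥(boxAt c L), val (σ i) * (Kk k L i.1 j.1 * val (η j)) :=
        Finset.sum_comm
    _ = ∑ j : ↥(boxAt c L), val (η j) * ∑ i : ↥(boxAt c L), Kk k L j.1 i.1 * val (σ i) := by
        refine Finset.sum_congr rfl fun j _ => ?_
        rw [Finset.mul_sum]
        refine Finset.sum_congr rfl fun i _ => ?_
        rw [Kk_symm k hsym L j.1 i.1]
        ring

lemma rev_num (β h : ℝ) (k : Site d → ℝ) (hsym : ∀ i : Site d, k (-i) = k i)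
    {B : Finset (Site d)} (hB : ∀ x ∉ B, k x = 0)
    (c : Site d) (L : ℕ) (hL : 0 < L) (σ η : ↥(boxAt c L) → Bool) :
    Pper β h k c L hL σ η * nuPerNum β h k c L hL η
      = Pper β h k c L hL η σ * nuPerNum β h k c L hL σ := by
  have hform : ∀ σ' η' : ↥(boxAt c L) → Bool,
      Pper β h k c L hL σ' η' * nuPerNum β h k c L hL η'
        = Real.exp (β * ∑ i : ↥(boxAt c L), val (σ' i) * field k i.1 (perfill c L hL η')
            + β * h * ∑ i : ↥(boxAt c L), val (σ' i)
            + β * h * ∑ i : ↥(boxAt c L), val (η' i))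
          * (1 / 2 : ℝ) ^ (Finset.univ : Finset ↥(boxAt c L)).card := by
    intro σ' η'
    unfold Pper nuPerNum
    rw [← Finset.prod_mul_distrib]
    have hfac : ∀ i : ↥(boxAt c L),
        pval β h k i.1 (σ' i) (perfill c L hL η') *
          (Real.cosh (β * field k i.1 (perfill c L hL η') + β * h) *
            Real.exp (β * h * val (η' i)))
        = Real.exp (val (σ' i) * (β * field k i.1 (perfill c L hL η') + β * h)
            + β * h * val (η' i)) * (1 / 2 : ℝ) := by
      intro i
      rw [pval_exp]
      have hc := Real.cosh_pos (β * field k i.1 (perfill c L hL η') + β * h)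
      rw [Real.exp_add]
      field_simp
    rw [Finset.prod_congr rfl (fun i _ => hfac i), Finset.prod_mul_distrib,
      Finset.prod_const, ← Real.exp_sum]
    congr 1
    rw [Finset.mul_sum, Finset.mul_sum, Finset.mul_sum, ← Finset.sum_add_distrib,
      ← Finset.sum_add_distrib]
    exact congrArg Real.exp (Finset.sum_congr rfl fun i _ => by ring)
  rw [hform σ η, hform η σ, Ssym k hsym hB c L hL σ η]
  ring_nf

lemma Pper_colsum (β h : ℝ) (k : Site d → ℝ) (c : Site d) (L : ℕ) (hL : 0 < L)
    (η : ↥(boxAt c L) → Bool) :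
    ∑ σ : ↥(boxAt c L) → Bool, Pper β h k c L hL σ η = 1 := by
  classical
  unfold Pper
  have h1 : ∏ i : ↥(boxAt c L), ∑ s ∈ (Finset.univ : Finset Bool),
      pval β h k i.1 s (perfill c L hL η)
      = ∑ σ ∈ Fintype.piFinset (fun _ : ↥(boxAt c L) => (Finset.univ : Finset Bool)),
          ∏ i : ↥(boxAt c L), pval β h k i.1 (σ i) (perfill c L hL η) :=
    Finset.prod_univ_sum _ _
  rw [Fintype.piFinset_univ] at h1
  rw [← h1]
  have h2 : ∀ i : ↥(boxAt c L), ∑ s ∈ (Finset.univ : Finset Bool),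
      pval β h k i.1 s (perfill c L hL η) = 1 := by
    intro i
    rw [Fintype.sum_bool]
    exact pval_sum_one β h k i.1 (perfill c L hL η)
  rw [Finset.prod_congr rfl fun i _ => h2 i, Finset.prod_const_one]

end Aux

/-- On a finite hypercube with periodic boundary conditions, `ν_Λ^per` is
the unique stationary probability measure of the PCA `P_Λ^per`, it is reversible for
`P_Λ^per`, and it coincides with the finite volume Gibbs measure `μ_Λ^per` for the natural
potential. -/
theorem stmt6 {d : ℕ} (hd : 0 < d) (β h R : ℝ) (hβ : 0 < β) (hR : 0 < R)
    (k : Site d → ℝ) (hsym : ∀ i : Site d, k (-i) = k i)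
    (hrange : ∀ i : Site d, R ^ 2 < (normSq i : ℝ) → k i = 0)
    (c : Site d) (L : ℕ) (hL : 0 < L) :
    (∀ σ : ↥(boxAt c L) → Bool, 0 ≤ nuPer β h k c L hL σ) ∧
    (∑ σ : ↥(boxAt c L) → Bool, nuPer β h k c L hL σ = 1) ∧
    (∀ σ : ↥(boxAt c L) → Bool,
      ∑ η : ↥(boxAt c L) → Bool, Pper β h k c L hL σ η * nuPer β h k c L hL η
        = nuPer β h k c L hL σ) ∧
    (∀ ν' : (↥(boxAt c L) → Bool) → ℝ, (∀ η, 0 ≤ ν' η) →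
      (∑ η : ↥(boxAt c L) → Bool, ν' η = 1) →
      (∀ σ : ↥(boxAt c L) → Bool,
        ∑ η : ↥(boxAt c L) → Bool, Pper β h k c L hL σ η * ν' η = ν' σ) →
      ν' = nuPer β h k c L hL) ∧
    (∀ σ η : ↥(boxAt c L) → Bool,
      Pper β h k c L hL σ η * nuPer β h k c L hL η
        = Pper β h k c L hL η σ * nuPer β h k c L hL σ) ∧
    (∀ σ : ↥(boxAt c L) → Bool, nuPer β h k c L hL σ = gibbsPer β h k c L hL σ) := by
  classical
  obtain ⟨B, hB⟩ := exists_support_finset R hR k hrange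
  -- positivity facts
  have hnum_pos : ∀ σ : ↥(boxAt c L) → Bool, 0 < nuPerNum β h k c L hL σ := by
    intro σ
    unfold nuPerNum
    exact Finset.prod_pos fun i _ => by positivity
  have hW : 0 < ∑ σ' : ↥(boxAt c L) → Bool, nuPerNum β h k c L hL σ' :=
    Finset.sum_pos (fun σ' _ => hnum_pos σ') Finset.univ_nonempty
  have hnu_pos : ∀ σ : ↥(boxAt c L) → Bool, 0 < nuPer β h k c L hL σ := by
    intro σ
    exact div_pos (hnum_pos σ) hW
  have hP_pos : ∀ σ η : ↥(boxAt c L) → Bool, 0 < Pper β h k c L hL σ η := by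
    intro σ η
    exact Finset.prod_pos fun i _ => pval_pos β h k i.1 (σ i) (perfill c L hL η)
  -- reversibility
  have hrev : ∀ σ η : ↥(boxAt c L) → Bool,
      Pper β h k c L hL σ η * nuPer β h k c L hL η
        = Pper β h k c L hL η σ * nuPer β h k c L hL σ := by
    intro σ η
    unfold nuPer
    rw [← mul_div_assoc, ← mul_div_assoc, rev_num β h k hsym hB c L hL σ η]
  -- sum of nuPer is 1
  have hsum_one : ∑ σ : ↥(boxAt c L) → Bool, nuPer β h k c L hL σ = 1 := by
    unfold nuPer
    rw [← Finset.sum_div, div_self hW.ne']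
  -- stationarity
  have hstat : ∀ σ : ↥(boxAt c L) → Bool,
      ∑ η : ↥(boxAt c L) → Bool, Pper β h k c L hL σ η * nuPer β h k c L hL η
        = nuPer β h k c L hL σ := by
    intro σ
    calc ∑ η : ↥(boxAt c L) → Bool, Pper β h k c L hL σ η * nuPer β h k c L hL η
        = ∑ η : ↥(boxAt c L) → Bool, Pper β h k c L hL η σ * nuPer β h k c L hL σ :=
          Finset.sum_congr rfl fun η _ => hrev σ η
      _ = (∑ η : ↥(boxAt c L) → Bool, Pper β h k c L hL η σ) * nuPer β h k c L hL σ := by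
          rw [Finset.sum_mul]
      _ = nuPer β h k c L hL σ := by rw [Pper_colsum β h k c L hL σ, one_mul]
  refine ⟨fun σ => (hnu_pos σ).le, hsum_one, hstat, ?_, hrev, ?_⟩
  · -- uniqueness
    intro ν' hpos hsum hstat'
    obtain ⟨σ₀, -, hmin⟩ := Finset.exists_min_image Finset.univ
      (fun η => ν' η / nuPer β h k c L hL η) ⟨fun _ => true, Finset.mem_univ _⟩
    set m : ℝ := ν' σ₀ / nuPer β h k c L hL σ₀ with hm
    have hge : ∀ η, m * nuPer β h k c L hL η ≤ ν' η := by
      intro η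
      have h1 : m ≤ ν' η / nuPer β h k c L hL η := hmin η (Finset.mem_univ η)
      calc m * nuPer β h k c L hL η
          ≤ (ν' η / nuPer β h k c L hL η) * nuPer β h k c L hL η :=
            mul_le_mul_of_nonneg_right h1 (hnu_pos η).le
        _ = ν' η := div_mul_cancel₀ _ (hnu_pos η).ne'
    have h0 : ν' σ₀ - m * nuPer β h k c L hL σ₀ = 0 := by
      rw [hm, div_mul_cancel₀ _ (hnu_pos σ₀).ne', sub_self]
    have hg_stat : ∑ η : ↥(boxAt c L) → Bool,
        Pper β h k c L hL σ₀ η * (ν' η - m * nuPer β h k c L hL η)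
          = ν' σ₀ - m * nuPer β h k c L hL σ₀ := by
      have e1 : ∀ η : ↥(boxAt c L) → Bool,
          Pper β h k c L hL σ₀ η * (ν' η - m * nuPer β h k c L hL η)
            = Pper β h k c L hL σ₀ η * ν' η
              - m * (Pper β h k c L hL σ₀ η * nuPer β h k c L hL η) := fun η => by ring
      rw [Finset.sum_congr rfl fun η _ => e1 η, Finset.sum_sub_distrib, hstat' σ₀,
        ← Finset.mul_sum, hstat σ₀]
    have hzero : ∀ η : ↥(boxAt c L) → Bool, ν' η - m * nuPer β h k c L hL η = 0 := by
      intro η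
      by_contra hne
      have hηpos : 0 < Pper β h k c L hL σ₀ η * (ν' η - m * nuPer β h k c L hL η) :=
        mul_pos (hP_pos σ₀ η) (lt_of_le_of_ne (by linarith [hge η]) (Ne.symm hne))
      have hsum_pos : 0 < ∑ η' : ↥(boxAt c L) → Bool,
          Pper β h k c L hL σ₀ η' * (ν' η' - m * nuPer β h k c L hL η') := by
        apply Finset.sum_pos'
        · intro η' _
          exact mul_nonneg (hP_pos σ₀ η').le (by linarith [hge η'])
        · exact ⟨η, Finset.mem_univ η, hηpos⟩
      rw [hg_stat, h0] at hsum_pos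
      exact lt_irrefl 0 hsum_pos
    have hm1 : m = 1 := by
      have h1 : ∑ η : ↥(boxAt c L) → Bool, ν' η
          = m * ∑ η : ↥(boxAt c L) → Bool, nuPer β h k c L hL η := by
        rw [Finset.mul_sum]
        exact Finset.sum_congr rfl fun η _ => by linarith [hzero η]
      rw [hsum, hsum_one, mul_one] at h1
      exact h1.symm
    funext η
    have := hzero η
    rw [hm1] at this
    linarith
  · -- identification with the Gibbs measure
    have hnum_eq : ∀ σ : ↥(boxAt c L) → Bool,
        nuPerNum β h k c L hL σ = gibbsPerNum β h k c L hL σ := by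
      intro σ
      unfold nuPerNum gibbsPerNum
      rw [← Finset.sum_neg_distrib, Real.exp_sum]
      refine Finset.prod_congr rfl fun i _ => ?_
      have hx : -(-(β * h * val (σ i)) -
          Real.log (Real.cosh (β * field k i.1 (perfill c L hL σ) + β * h)))
          = β * h * val (σ i) +
            Real.log (Real.cosh (β * field k i.1 (perfill c L hL σ) + β * h)) := by
        ring
      rw [hx, Real.exp_add, Real.exp_log (Real.cosh_pos _)]
      ring
    intro σ
    unfold nuPer gibbsPer
    rw [hnum_eq σ, Finset.sum_congr rfl fun σ' _ => hnum_eq σ']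

end
end PCA
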